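/- For N ≥ 1, the functions φ_{ν|N} = det[φ_{ν_j+N-j}(x_i)]/V_N built from a system {φ_n} of orthogonal polynomials with respect to a measure w on ℝ are pairwise orthogonal with respect to the measure V_N² ∏_{i=1}^N w(dx_i) on the ordered region x_1 ≥ ... ≥ x_N: for distinct partitions ν ≠ μ of length ≤ N, ∫ φ_{ν|N} φ_{μ|N} V_N² ∏ w(dx_i) = 0. -/

import Mathlib

open scoped BigOperators

/-- The Vandermonde polynomial `∏_{i<j} (x_i - x_j)`. -/
noncomputable def vandermonde (N : ℕ) : MvPolynomial (Fin N) ℝ :=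
  ∏ p ∈ Finset.univ.filter (fun p : Fin N × Fin N => p.1 < p.2),
    (MvPolynomial.X p.1 - MvPolynomial.X p.2)

/-- The alternating determinant `det[φ_{ν_j + N - j}(x_i)]` (0-indexed:
exponent `ν.rowLen j + (N - 1 - j)`). -/
noncomputable def phiDet (N : ℕ) (φ : ℕ → Polynomial ℝ) (ν : YoungDiagram) :
    MvPolynomial (Fin N) ℝ :=
  Matrix.det (Matrix.of fun i j : Fin N =>
    Polynomial.aeval (MvPolynomial.X i) (φ (ν.rowLen j + (N - 1 - (j : ℕ)))))

/-- Elementary symmetric polynomial in `N` variables, extended by `0` to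
negative indices (`e_0 = 1`, `e_k = 0` for `k > N` automatically). -/
noncomputable def esymmZ (N : ℕ) (k : ℤ) : MvPolynomial (Fin N) ℝ :=
  if k < 0 then 0 else MvPolynomial.esymm (Fin N) ℝ k.toNat

/-- The Schur polynomial in `N` variables via the Nägelsbach–Kostka formula
`s_ν = det[e_{ν'_i - i + j}]`. -/
noncomputable def schurPoly (N : ℕ) (ν : YoungDiagram) : MvPolynomial (Fin N) ℝ :=
  Matrix.det (Matrix.of fun i j : Fin (ν.rowLen 0) =>
    esymmZ N ((ν.colLen i : ℤ) - (i : ℤ) + (j : ℤ)))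

open MeasureTheory in
/-- Any real polynomial is integrable w.r.t. a measure with all moments finite. -/
lemma poly_integrable (w : Measure ℝ) (hmom : ∀ k : ℕ, Integrable (fun x : ℝ => x ^ k) w)
    (p : Polynomial ℝ) : Integrable (fun t => p.eval t) w := by
  have h : (fun t : ℝ => p.eval t)
      = fun t => ∑ k ∈ Finset.range (p.natDegree + 1), p.coeff k * t ^ k := by
    funext t; rw [Polynomial.eval_eq_sum_range]
  rw [h]
  exact integrable_finset_sum _ (fun k _ => (hmom k).const_mul _)

lemma eval_aeval_X {N : ℕ} (x : Fin N → ℝ) (p : Polynomial ℝ) (i : Fin N) :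
    MvPolynomial.eval x (Polynomial.aeval (MvPolynomial.X i) p) = p.eval (x i) := by
  rw [Polynomial.aeval_def, Polynomial.hom_eval₂]
  have h : (MvPolynomial.eval x).comp (algebraMap ℝ (MvPolynomial (Fin N) ℝ)) = RingHom.id ℝ := by
    ext r; simp [MvPolynomial.algebraMap_eq]
  rw [Polynomial.eval₂_eq_eval_map, h, Polynomial.map_id, MvPolynomial.eval_X]

open MeasureTheory in
/-- The `N`-variate polynomials `φ_{ν|N} = det[φ_{ν_j+N-j}(x_i)]/V_N` built from
orthogonal polynomials `{φ_n}` for a measure `w` on `ℝ` with finite moments are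
pairwise orthogonal w.r.t. the measure `V_N² ∏ w(dx_i)` on the region
`x_1 ≥ … ≥ x_N`. -/
theorem phi_family_orthogonal (N : ℕ) (hN : 1 ≤ N)
    (w : Measure ℝ) [SigmaFinite w]
    (hmom : ∀ k : ℕ, Integrable (fun x : ℝ => x ^ k) w)
    (φ : ℕ → Polynomial ℝ) (hφ : ∀ n : ℕ, (φ n).degree = (n : ℕ))
    (horth : ∀ m n : ℕ, m ≠ n → ∫ x : ℝ, (φ m).eval x * (φ n).eval x ∂w = 0)
    (P : YoungDiagram → MvPolynomial (Fin N) ℝ)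
    (hP : ∀ ν : YoungDiagram, ν.colLen 0 ≤ N → vandermonde N * P ν = phiDet N φ ν)
    (ν μ : YoungDiagram) (hν : ν.colLen 0 ≤ N) (hμ : μ.colLen 0 ≤ N) (hne : ν ≠ μ) :
    ∫ x in {x : Fin N → ℝ | ∀ i j : Fin N, i ≤ j → x j ≤ x i},
      MvPolynomial.eval x (P ν * P μ * (vandermonde N) ^ 2)
      ∂(Measure.pi fun _ : Fin N => w) = 0 := by
  classical
  letI : MeasureSpace ℝ := ⟨w⟩
  haveI : SigmaFinite (volume : Measure ℝ) := (inferInstance : SigmaFinite w)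
  have hvol : (Measure.pi fun _ : Fin N => w) = (volume : Measure (Fin N → ℝ)) := rfl
  set S : Set (Fin N → ℝ) := {x : Fin N → ℝ | ∀ i j : Fin N, i ≤ j → x j ≤ x i} with hS
  set a : ℕ → ℕ := fun j => ν.rowLen j + (N - 1 - j) with ha
  set b : ℕ → ℕ := fun j => μ.rowLen j + (N - 1 - j) with hb
  set A : (Fin N → ℝ) → Matrix (Fin N) (Fin N) ℝ :=
    fun x => Matrix.of fun i j : Fin N => (φ (a (j : ℕ))).eval (x i) with hA
  set B : (Fin N → ℝ) → Matrix (Fin N) (Fin N) ℝ :=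
    fun x => Matrix.of fun i j : Fin N => (φ (b (j : ℕ))).eval (x i) with hB
  set f : (Fin N → ℝ) → ℝ := fun x => (A x).det * (B x).det with hf
  -- The integrand equals f
  have hpoly : P ν * P μ * vandermonde N ^ 2 = phiDet N φ ν * phiDet N φ μ := by
    calc P ν * P μ * vandermonde N ^ 2
        = (vandermonde N * P ν) * (vandermonde N * P μ) := by ring
      _ = phiDet N φ ν * phiDet N φ μ := by rw [hP ν hν, hP μ hμ]
  have hevalDetA : ∀ x : Fin N → ℝ, MvPolynomial.eval x (phiDet N φ ν) = (A x).det := by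
    intro x
    rw [phiDet, RingHom.map_det]
    congr 1
    ext i j
    simp only [Matrix.map_apply, Matrix.of_apply, hA]
    exact eval_aeval_X x _ i
  have hevalDetB : ∀ x : Fin N → ℝ, MvPolynomial.eval x (phiDet N φ μ) = (B x).det := by
    intro x
    rw [phiDet, RingHom.map_det]
    congr 1
    ext i j
    simp only [Matrix.map_apply, Matrix.of_apply, hB]
    exact eval_aeval_X x _ i
  have hfeval : ∀ x : Fin N → ℝ,
      MvPolynomial.eval x (P ν * P μ * vandermonde N ^ 2) = f x := by
    intro x
    rw [hpoly, map_mul, hevalDetA, hevalDetB]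
  -- a strictly decreasing, etc.
  have hstrict : ∀ (κ : YoungDiagram) (i j : Fin N), i < j →
      κ.rowLen (j : ℕ) + (N - 1 - (j : ℕ)) < κ.rowLen (i : ℕ) + (N - 1 - (i : ℕ)) := by
    intro κ i j hij
    have h1 : κ.rowLen (j : ℕ) ≤ κ.rowLen (i : ℕ) := κ.rowLen_anti _ _ (le_of_lt hij)
    have h2 : (i : ℕ) < (j : ℕ) := hij
    have h3 : (j : ℕ) < N := j.isLt
    omega
  -- existence of an exponent of ν not among those of μ
  have hexists : ∃ j₀ : Fin N, ∀ k : Fin N, a (j₀ : ℕ) ≠ b (k : ℕ) := by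
    by_contra hcon
    push_neg at hcon
    set fa : Fin N → ℕ := fun j => a (j.rev : ℕ) with hfa'
    set fb : Fin N → ℕ := fun j => b (j.rev : ℕ) with hfb'
    have hfa : StrictMono fa := fun i j hij => hstrict ν _ _ (Fin.rev_lt_rev.mpr hij)
    have hfb : StrictMono fb := fun i j hij => hstrict μ _ _ (Fin.rev_lt_rev.mpr hij)
    have hsub : Finset.image fa Finset.univ ⊆ Finset.image fb Finset.univ := by
      intro m hm
      simp only [Finset.mem_image, Finset.mem_univ, true_and] at hm ⊢
      obtain ⟨j, rfl⟩ := hm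
      obtain ⟨k, hk⟩ := hcon j.rev
      refine ⟨k.rev, ?_⟩
      simp only [hfb', Fin.rev_rev]
      exact hk.symm
    have hcard : (Finset.image fb Finset.univ).card ≤ (Finset.image fa Finset.univ).card := by
      rw [Finset.card_image_of_injective _ hfa.injective,
        Finset.card_image_of_injective _ hfb.injective]
    have heq := Finset.eq_of_subset_of_card_le hsub hcard
    have hrange : Set.range fa = Set.range fb := by
      have hr : ∀ g : Fin N → ℕ, Set.range g = ↑(Finset.image g Finset.univ) := by
        intro g; ext m; simp
      rw [hr fa, hr fb, heq]
    haveI : WellFoundedLT (Fin N) := Finite.to_wellFoundedLT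
    have hfab : fa = fb := (hfa.range_inj hfb).mp hrange
    have hab : ∀ j : Fin N, a (j : ℕ) = b (j : ℕ) := by
      intro j
      have h := congrFun hfab j.rev
      simp only [hfa', hfb', Fin.rev_rev] at h
      exact h
    apply hne
    have hrow : ∀ i : ℕ, ν.rowLen i = μ.rowLen i := by
      intro i
      by_cases hi : i < N
      · have h := hab ⟨i, hi⟩
        simp only [ha, hb] at h
        omega
      · have h1 : ν.rowLen i = 0 := by
          have hm : ¬ (i, 0) ∈ ν := by
            rw [YoungDiagram.mem_iff_lt_colLen]; omega
          rw [YoungDiagram.mem_iff_lt_rowLen] at hm; omega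
        have h2 : μ.rowLen i = 0 := by
          have hm : ¬ (i, 0) ∈ μ := by
            rw [YoungDiagram.mem_iff_lt_colLen]; omega
          rw [YoungDiagram.mem_iff_lt_rowLen] at hm; omega
        rw [h1, h2]
    have hcells : ν.cells = μ.cells := by
      ext ⟨i, j⟩
      rw [YoungDiagram.mem_cells, YoungDiagram.mem_cells,
        YoungDiagram.mem_iff_lt_rowLen, YoungDiagram.mem_iff_lt_rowLen, hrow i]
    exact YoungDiagram.ext hcells
  obtain ⟨j₀, hj₀⟩ := hexists
  -- symmetry of f under permutations
  have hsymm : ∀ (π : Equiv.Perm (Fin N)) (x : Fin N → ℝ), f (fun i => x (π i)) = f x := by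
    intro π x
    have hAp : A (fun i => x (π i)) = (A x).submatrix π id := by
      ext i j; simp [hA]
    have hBp : B (fun i => x (π i)) = (B x).submatrix π id := by
      ext i j; simp [hB]
    have hs : ((Equiv.Perm.sign π : ℤ) : ℝ) * ((Equiv.Perm.sign π : ℤ) : ℝ) = 1 := by
      rw [← Int.cast_mul, ← Units.val_mul, Int.units_mul_self]; norm_num
    simp only [hf, hAp, hBp, Matrix.det_permute]
    rw [mul_mul_mul_comm, hs, one_mul]
  -- f vanishes when two coordinates coincide
  have hdiag : ∀ (x : Fin N → ℝ) (i j : Fin N), i ≠ j → x i = x j → f x = 0 := by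
    intro x i j hij hxij
    have hzero : (A x).det = 0 := by
      refine Matrix.det_zero_of_row_eq hij (funext fun k => ?_)
      simp [hA, hxij]
    simp [hf, hzero]
  -- expansion of f as a double sum of products over coordinates
  have hexp : ∀ x : Fin N → ℝ, f x = ∑ σ : Equiv.Perm (Fin N), ∑ τ : Equiv.Perm (Fin N),
      (((Equiv.Perm.sign σ : ℤ) : ℝ) * ((Equiv.Perm.sign τ : ℤ) : ℝ)) *
        ∏ i : Fin N, (φ (a ((σ i : Fin N) : ℕ)) * φ (b ((τ i : Fin N) : ℕ))).eval (x i) := by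
    intro x
    have hdetA : (A x).det = ∑ σ : Equiv.Perm (Fin N),
        ((Equiv.Perm.sign σ : ℤ) : ℝ) * ∏ i : Fin N, (φ (a ((σ i : Fin N) : ℕ))).eval (x i) := by
      rw [← Matrix.det_transpose, Matrix.det_apply']
      refine Finset.sum_congr rfl fun σ _ => ?_
      congr 1
    have hdetB : (B x).det = ∑ τ : Equiv.Perm (Fin N),
        ((Equiv.Perm.sign τ : ℤ) : ℝ) * ∏ i : Fin N, (φ (b ((τ i : Fin N) : ℕ))).eval (x i) := by
      rw [← Matrix.det_transpose, Matrix.det_apply']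
      refine Finset.sum_congr rfl fun τ _ => ?_
      congr 1
    simp only [hf]
    rw [hdetA, hdetB, Finset.sum_mul_sum]
    refine Finset.sum_congr rfl fun σ _ => Finset.sum_congr rfl fun τ _ => ?_
    simp only [Polynomial.eval_mul]
    rw [Finset.prod_mul_distrib]
    ring
  -- integrability
  have hterm_int : ∀ g : Fin N → Polynomial ℝ,
      Integrable (fun x : Fin N → ℝ => ∏ i, (g i).eval (x i)) (volume : Measure (Fin N → ℝ)) :=
    fun g => Integrable.fintype_prod (fun i => poly_integrable w hmom (g i))
  have hfint : Integrable f (Measure.pi fun _ : Fin N => w) := by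
    rw [hvol]
    have hfeq : f = fun x => ∑ σ : Equiv.Perm (Fin N), ∑ τ : Equiv.Perm (Fin N),
        (((Equiv.Perm.sign σ : ℤ) : ℝ) * ((Equiv.Perm.sign τ : ℤ) : ℝ)) *
          ∏ i : Fin N, (φ (a ((σ i : Fin N) : ℕ)) * φ (b ((τ i : Fin N) : ℕ))).eval (x i) :=
      funext hexp
    rw [hfeq]
    exact integrable_finset_sum _ fun σ _ => integrable_finset_sum _ fun τ _ =>
      ((hterm_int fun i => φ (a ((σ i : Fin N) : ℕ)) * φ (b ((τ i : Fin N) : ℕ))).const_mul _)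
  -- the full-space integral vanishes
  have hfull : ∫ x, f x ∂(Measure.pi fun _ : Fin N => w) = 0 := by
    rw [hvol]
    have hfeq : f = fun x => ∑ σ : Equiv.Perm (Fin N), ∑ τ : Equiv.Perm (Fin N),
        (((Equiv.Perm.sign σ : ℤ) : ℝ) * ((Equiv.Perm.sign τ : ℤ) : ℝ)) *
          ∏ i : Fin N, (φ (a ((σ i : Fin N) : ℕ)) * φ (b ((τ i : Fin N) : ℕ))).eval (x i) :=
      funext hexp
    rw [hfeq]
    rw [integral_finset_sum _ fun σ _ => integrable_finset_sum _ fun τ _ =>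
      ((hterm_int fun i => φ (a ((σ i : Fin N) : ℕ)) * φ (b ((τ i : Fin N) : ℕ))).const_mul _)]
    refine Finset.sum_eq_zero fun σ _ => ?_
    rw [integral_finset_sum _ fun τ _ =>
      ((hterm_int fun i => φ (a ((σ i : Fin N) : ℕ)) * φ (b ((τ i : Fin N) : ℕ))).const_mul _)]
    refine Finset.sum_eq_zero fun τ _ => ?_
    rw [integral_const_mul]
    rw [← hvol, MeasureTheory.integral_fintype_prod_eq_prod (ι := Fin N)
      (fun i t => (φ (a ((σ i : Fin N) : ℕ)) * φ (b ((τ i : Fin N) : ℕ))).eval t)]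
    rw [Finset.prod_eq_zero (Finset.mem_univ (σ.symm j₀))]
    · ring
    · have hz : ∫ t : ℝ, (φ (a ((σ (σ.symm j₀) : Fin N) : ℕ))).eval t *
          (φ (b ((τ (σ.symm j₀) : Fin N) : ℕ))).eval t ∂w = 0 :=
        horth _ _ (by simpa using hj₀ (τ (σ.symm j₀)))
      simpa [Polynomial.eval_mul] using hz
  -- permuted regions
  have hSπ_meas : ∀ π : Equiv.Perm (Fin N),
      MeasurableSet {x : Fin N → ℝ | ∀ i j : Fin N, i ≤ j → x (π j) ≤ x (π i)} := by
    intro π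
    have hrw : {x : Fin N → ℝ | ∀ i j : Fin N, i ≤ j → x (π j) ≤ x (π i)}
        = ⋂ i : Fin N, ⋂ j : Fin N, ⋂ (_ : i ≤ j), {x : Fin N → ℝ | x (π j) ≤ x (π i)} := by
      ext x; simp [Set.mem_iInter]
    rw [hrw]
    exact MeasurableSet.iInter fun i => MeasurableSet.iInter fun j =>
      MeasurableSet.iInter fun _ =>
        measurableSet_le (measurable_pi_apply _) (measurable_pi_apply _)
  -- each permuted region gives the same integral
  have hpermint : ∀ π : Equiv.Perm (Fin N),
      ∫ x in {x : Fin N → ℝ | ∀ i j : Fin N, i ≤ j → x (π j) ≤ x (π i)}, f x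
        ∂(Measure.pi fun _ : Fin N => w)
      = ∫ x in S, f x ∂(Measure.pi fun _ : Fin N => w) := by
    intro π
    have hmp := measurePreserving_piCongrLeft (fun _ : Fin N => w) π.symm
    set T := MeasurableEquiv.piCongrLeft (fun _ : Fin N => ℝ) π.symm with hT
    have hTx : ∀ (x : Fin N → ℝ) (i : Fin N), T x i = x (π i) := by
      intro x i
      have h := Equiv.piCongrLeft_apply_apply (fun _ : Fin N => ℝ) π.symm x (π i)
      simpa [hT, MeasurableEquiv.coe_piCongrLeft] using h
    have hpre : T ⁻¹' S = {x : Fin N → ℝ | ∀ i j : Fin N, i ≤ j → x (π j) ≤ x (π i)} := by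
      ext x
      simp only [Set.mem_preimage, hS, Set.mem_setOf_eq]
      constructor <;> intro h i j hij
      · have h' := h i j hij; rwa [hTx, hTx] at h'
      · rw [hTx, hTx]; exact h i j hij
    have h1 : ∫ x in T ⁻¹' S, f (T x) ∂(Measure.pi fun _ : Fin N => w)
        = ∫ y in S, f y ∂(Measure.pi fun _ : Fin N => w) :=
      hmp.setIntegral_preimage_emb (MeasurableEquiv.measurableEmbedding T) f S
    rw [← h1, hpre]
    refine integral_congr_ae (Filter.Eventually.of_forall fun x => ?_)
    show f x = f (T x)
    have hTfun : T x = fun i => x (π i) := funext (hTx x)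
    rw [hTfun, hsymm π x]
  -- sorting permutation
  have hsort : ∀ x : Fin N → ℝ, ∀ i j : Fin N, i ≤ j →
      x ((Fin.revPerm.trans (Tuple.sort x)) j) ≤ x ((Fin.revPerm.trans (Tuple.sort x)) i) := by
    intro x i j hij
    simp only [Equiv.trans_apply, Fin.revPerm_apply]
    exact Tuple.monotone_sort x (Fin.rev_le_rev.mpr hij)
  -- uniqueness of the sorting permutation for injective x
  have huniq : ∀ (x : Fin N → ℝ), Function.Injective x → ∀ π π' : Equiv.Perm (Fin N),
      (∀ i j : Fin N, i ≤ j → x (π j) ≤ x (π i)) →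
      (∀ i j : Fin N, i ≤ j → x (π' j) ≤ x (π' i)) → π = π' := by
    intro x hx π π' hπ hπ'
    have h1 : Monotone (x ∘ (Fin.revPerm.trans π)) := by
      intro i j hij
      simp only [Function.comp_apply, Equiv.trans_apply, Fin.revPerm_apply]
      exact hπ _ _ (Fin.rev_le_rev.mpr hij)
    have h2 : Monotone (x ∘ (Fin.revPerm.trans π')) := by
      intro i j hij
      simp only [Function.comp_apply, Equiv.trans_apply, Fin.revPerm_apply]
      exact hπ' _ _ (Fin.rev_le_rev.mpr hij)
    have h3 := Tuple.unique_monotone h1 h2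
    ext i
    have h4 := congrFun h3 i.rev
    simp only [Function.comp_apply, Equiv.trans_apply, Fin.revPerm_apply, Fin.rev_rev] at h4
    exact congrArg Fin.val (hx h4)
  -- pointwise identity: sum of indicators over permuted regions equals f
  have hsum : ∀ x : Fin N → ℝ,
      (∑ π : Equiv.Perm (Fin N),
        Set.indicator {y : Fin N → ℝ | ∀ i j : Fin N, i ≤ j → y (π j) ≤ y (π i)} f x) = f x := by
    intro x
    by_cases hx : Function.Injective x
    · rw [Finset.sum_eq_single_of_mem (Fin.revPerm.trans (Tuple.sort x)) (Finset.mem_univ _)]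
      · have hmem : x ∈ {y : Fin N → ℝ | ∀ i j : Fin N, i ≤ j →
            y ((Fin.revPerm.trans (Tuple.sort x)) j) ≤ y ((Fin.revPerm.trans (Tuple.sort x)) i)} :=
          fun i j hij => hsort x i j hij
        exact Set.indicator_of_mem hmem f
      · intro π _ hne'
        refine Set.indicator_of_notMem (fun hmem => hne' ?_) f
        have hmem' : ∀ i j : Fin N, i ≤ j → x (π j) ≤ x (π i) := hmem
        exact huniq x hx π _ hmem' (fun i j hij => hsort x i j hij)
    · have hxne : ∃ i j : Fin N, x i = x j ∧ i ≠ j := by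
        simpa [Function.Injective, not_forall] using hx
      obtain ⟨i, j, hxij, hij⟩ := hxne
      have hfx : f x = 0 := hdiag x i j hij hxij
      rw [hfx]
      refine Finset.sum_eq_zero fun π _ => ?_
      by_cases h : x ∈ {y : Fin N → ℝ | ∀ i j : Fin N, i ≤ j → y (π j) ≤ y (π i)}
      · rw [Set.indicator_of_mem h]; exact hfx
      · exact Set.indicator_of_notMem h f
  -- assembling: N! times the ordered-region integral is the full integral
  have hkey : (Fintype.card (Equiv.Perm (Fin N))) •
      (∫ x in S, f x ∂(Measure.pi fun _ : Fin N => w)) = 0 := by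
    have hstep : ∑ π : Equiv.Perm (Fin N),
        ∫ x in {x : Fin N → ℝ | ∀ i j : Fin N, i ≤ j → x (π j) ≤ x (π i)}, f x
          ∂(Measure.pi fun _ : Fin N => w)
        = ∫ x, f x ∂(Measure.pi fun _ : Fin N => w) := by
      have hind : ∀ π : Equiv.Perm (Fin N),
          ∫ x in {x : Fin N → ℝ | ∀ i j : Fin N, i ≤ j → x (π j) ≤ x (π i)}, f x
            ∂(Measure.pi fun _ : Fin N => w)
          = ∫ x, Set.indicator {y : Fin N → ℝ | ∀ i j : Fin N, i ≤ j → y (π j) ≤ y (π i)} f x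
            ∂(Measure.pi fun _ : Fin N => w) :=
        fun π => (integral_indicator (hSπ_meas π)).symm
      simp_rw [hind]
      rw [← integral_finset_sum _ fun π _ => hfint.indicator (hSπ_meas π)]
      exact integral_congr_ae (Filter.Eventually.of_forall hsum)
    calc (Fintype.card (Equiv.Perm (Fin N))) •
        (∫ x in S, f x ∂(Measure.pi fun _ : Fin N => w))
        = ∑ _π : Equiv.Perm (Fin N), ∫ x in S, f x ∂(Measure.pi fun _ : Fin N => w) := by
          rw [Finset.sum_const, Finset.card_univ]
      _ = ∑ π : Equiv.Perm (Fin N),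
          ∫ x in {x : Fin N → ℝ | ∀ i j : Fin N, i ≤ j → x (π j) ≤ x (π i)}, f x
            ∂(Measure.pi fun _ : Fin N => w) :=
          (Finset.sum_congr rfl fun π _ => (hpermint π).symm)
      _ = ∫ x, f x ∂(Measure.pi fun _ : Fin N => w) := hstep
      _ = 0 := hfull
  have hSint : ∫ x in S, f x ∂(Measure.pi fun _ : Fin N => w) = 0 := by
    have hcard : (0 : ℕ) < Fintype.card (Equiv.Perm (Fin N)) := Fintype.card_pos
    rw [nsmul_eq_mul] at hkey
    have := mul_eq_zero.mp hkey
    rcases this with h | h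
    · exact absurd h (by positivity)
    · exact h
  calc ∫ x in S, MvPolynomial.eval x (P ν * P μ * vandermonde N ^ 2)
        ∂(Measure.pi fun _ : Fin N => w)
      = ∫ x in S, f x ∂(Measure.pi fun _ : Fin N => w) :=
        integral_congr_ae (Filter.Eventually.of_forall fun x => hfeval x)
    _ = 0 := hSint
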